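/- Let u be a symmetric 3×3 real matrix and let t ∈ ℝ³ be a unit vector. Suppose (m₀, n₀, t) and (m₁, n₁, t) are both right-handed orthonormal bases of ℝ³. Then the matrix Skew(n₁) u Skew(m₁) − Skew(n₀) u Skew(m₀) is symmetric. -/

import Mathlib

open Matrix

lemma skew_eq_aux (Skew : (Fin 3 → ℝ) → Matrix (Fin 3) (Fin 3) ℝ)
    (hSkew : ∀ v w : Fin 3 → ℝ, (Skew v) *ᵥ w = crossProduct v w)
    (v : Fin 3 → ℝ) :
    Skew v = !![0, -v 2, v 1; v 2, 0, -v 0; -v 1, v 0, 0] := by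
  ext i j
  have h := congrFun (hSkew v (Pi.single j 1)) i
  rw [mulVec_single] at h
  fin_cases i <;> fin_cases j <;>
    simpa [crossProduct, Pi.single_apply] using h

/-- For a symmetric matrix `u` and two right-handed orthonormal bases
`(m₀, n₀, t)` and `(m₁, n₁, t)` sharing the third vector `t`, the matrix
`Skew(n₁) u Skew(m₁) − Skew(n₀) u Skew(m₀)` is symmetric. -/
theorem stmt_12 (Skew : (Fin 3 → ℝ) → Matrix (Fin 3) (Fin 3) ℝ)
    (hSkew : ∀ v w : Fin 3 → ℝ, (Skew v) *ᵥ w = crossProduct v w)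
    (u : Matrix (Fin 3) (Fin 3) ℝ) (hu : uᵀ = u)
    (t m₀ n₀ m₁ n₁ : Fin 3 → ℝ) (ht : t ⬝ᵥ t = 1)
    (hm₀ : m₀ ⬝ᵥ m₀ = 1) (hn₀ : n₀ ⬝ᵥ n₀ = 1)
    (hm₀n₀ : m₀ ⬝ᵥ n₀ = 0) (hm₀t : m₀ ⬝ᵥ t = 0) (hn₀t : n₀ ⬝ᵥ t = 0)
    (hc₀ : crossProduct m₀ n₀ = t)
    (hm₁ : m₁ ⬝ᵥ m₁ = 1) (hn₁ : n₁ ⬝ᵥ n₁ = 1)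
    (hm₁n₁ : m₁ ⬝ᵥ n₁ = 0) (hm₁t : m₁ ⬝ᵥ t = 0) (hn₁t : n₁ ⬝ᵥ t = 0)
    (hc₁ : crossProduct m₁ n₁ = t) :
    (Skew n₁ * u * Skew m₁ - Skew n₀ * u * Skew m₀)ᵀ =
      Skew n₁ * u * Skew m₁ - Skew n₀ * u * Skew m₀ := by
  have hu01 : u 1 0 = u 0 1 := by
    simpa using (congrFun (congrFun hu 1) 0).symm
  have hu02 : u 2 0 = u 0 2 := by
    simpa using (congrFun (congrFun hu 2) 0).symm
  have hu12 : u 2 1 = u 1 2 := by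
    simpa using (congrFun (congrFun hu 2) 1).symm
  have e00 : m₀ 1 * n₀ 2 - m₀ 2 * n₀ 1 = t 0 := by
    simpa [crossProduct] using congrFun hc₀ 0
  have e01 : m₀ 2 * n₀ 0 - m₀ 0 * n₀ 2 = t 1 := by
    simpa [crossProduct] using congrFun hc₀ 1
  have e02 : m₀ 0 * n₀ 1 - m₀ 1 * n₀ 0 = t 2 := by
    simpa [crossProduct] using congrFun hc₀ 2
  have e10 : m₁ 1 * n₁ 2 - m₁ 2 * n₁ 1 = t 0 := by
    simpa [crossProduct] using congrFun hc₁ 0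
  have e11 : m₁ 2 * n₁ 0 - m₁ 0 * n₁ 2 = t 1 := by
    simpa [crossProduct] using congrFun hc₁ 1
  have e12 : m₁ 0 * n₁ 1 - m₁ 1 * n₁ 0 = t 2 := by
    simpa [crossProduct] using congrFun hc₁ 2
  rw [skew_eq_aux Skew hSkew m₀, skew_eq_aux Skew hSkew n₀,
    skew_eq_aux Skew hSkew m₁, skew_eq_aux Skew hSkew n₁]
  ext i j
  fin_cases i <;> fin_cases j
  · rfl
  · simp only [transpose_apply, Matrix.sub_apply, mul_apply, Fin.sum_univ_three]
    simp [hu01, hu02, hu12]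
    linear_combination -u 0 2 * (e10 - e00) - u 1 2 * (e11 - e01) - u 2 2 * (e12 - e02)
  · simp only [transpose_apply, Matrix.sub_apply, mul_apply, Fin.sum_univ_three]
    simp [hu01, hu02, hu12]
    linear_combination u 0 1 * (e10 - e00) + u 1 1 * (e11 - e01) + u 1 2 * (e12 - e02)
  · simp only [transpose_apply, Matrix.sub_apply, mul_apply, Fin.sum_univ_three]
    simp [hu01, hu02, hu12]
    linear_combination u 0 2 * (e10 - e00) + u 1 2 * (e11 - e01) + u 2 2 * (e12 - e02)
  · rfl
  · simp only [transpose_apply, Matrix.sub_apply, mul_apply, Fin.sum_univ_three]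
    simp [hu01, hu02, hu12]
    linear_combination -u 0 0 * (e10 - e00) - u 0 1 * (e11 - e01) - u 0 2 * (e12 - e02)
  · simp only [transpose_apply, Matrix.sub_apply, mul_apply, Fin.sum_univ_three]
    simp [hu01, hu02, hu12]
    linear_combination -u 0 1 * (e10 - e00) - u 1 1 * (e11 - e01) - u 1 2 * (e12 - e02)
  · simp only [transpose_apply, Matrix.sub_apply, mul_apply, Fin.sum_univ_three]
    simp [hu01, hu02, hu12]
    linear_combination u 0 0 * (e10 - e00) + u 0 1 * (e11 - e01) + u 0 2 * (e12 - e02)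
  · rfl
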